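/- Let G be a connected simple graph on a finite vertex set V that is not a complete graph. Then there exist two distinct non-adjacent vertices a, b ∈ V such that, with G + ab denoting the graph obtained from G by adding the edge ab, one has |ℒ_1(G + ab, a)| ≤ |ℒ_1(G, a)| − 1. -/
import Mathlib


/-- If a connected graph `G` on a finite vertex set is not complete, then there are two distinct
non-adjacent vertices `a, b` such that adding the edge `ab` strictly decreases the number of
`1`-Lipschitz mappings rooted at `a`: `|ℒ₁(G + ab, a)| ≤ |ℒ₁(G, a)| - 1`. -/
theorem stmt_11 {V : Type*} [Fintype V] (G : SimpleGraph V) (hG : G.Connected)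
    (hnc : ¬ ∀ x y : V, x ≠ y → G.Adj x y) :
    ∃ a b : V, a ≠ b ∧ ¬ G.Adj a b ∧
      {f : V → ℤ | f a = 0 ∧
          ∀ u v : V, (G ⊔ SimpleGraph.fromEdgeSet {s(a, b)}).Adj u v →
            |f u - f v| ≤ (1 : ℤ)}.ncard + 1 ≤
      {f : V → ℤ | f a = 0 ∧ ∀ u v : V, G.Adj u v → |f u - f v| ≤ (1 : ℤ)}.ncard := by
  classical
  push_neg at hnc
  obtain ⟨a, b, hab, hnadj⟩ := hnc
  refine ⟨a, b, hab, hnadj, ?_⟩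
  set A := {f : V → ℤ | f a = 0 ∧
      ∀ u v : V, (G ⊔ SimpleGraph.fromEdgeSet {s(a, b)}).Adj u v → |f u - f v| ≤ (1 : ℤ)} with hA
  set B := {f : V → ℤ | f a = 0 ∧ ∀ u v : V, G.Adj u v → |f u - f v| ≤ (1 : ℤ)} with hB
  -- Lipschitz along walks
  have key : ∀ f ∈ B, ∀ u v : V, ∀ w : G.Walk u v, |f u - f v| ≤ w.length := by
    intro f hf u v w
    induction w with
    | nil => simp
    | @cons x y z h p ih =>
      calc |f x - f z| ≤ |f x - f y| + |f y - f z| := abs_sub_le _ _ _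
        _ ≤ 1 + p.length := add_le_add (hf.2 x y h) ih
        _ = (p.cons h).length := by simp [SimpleGraph.Walk.length_cons]; ring
  -- B is finite
  have hBfin : B.Finite := by
    have hsub : B ⊆ Set.pi Set.univ
        (fun _ : V => Set.Icc (-(Fintype.card V : ℤ)) (Fintype.card V)) := by
      intro f hf
      rw [Set.mem_univ_pi]
      intro v
      obtain ⟨w⟩ := hG.preconnected a v
      have h1 := key f hf a v (w.toPath : G.Walk a v)
      have h2 : ((w.toPath : G.Walk a v)).length < Fintype.card V := w.toPath.2.length_lt
      rw [hf.1] at h1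
      rw [zero_sub, abs_neg] at h1
      have : |f v| ≤ (Fintype.card V : ℤ) := by
        exact h1.trans (by exact_mod_cast h2.le)
      rw [Set.mem_Icc]
      constructor <;> [linarith [neg_abs_le (f v)]; linarith [le_abs_self (f v)]]
    exact (Set.Finite.pi (fun _ => Set.finite_Icc _ _)).subset hsub
  -- A ⊆ B
  have hAB : A ⊆ B := by
    intro f hf
    exact ⟨hf.1, fun u v huv => hf.2 u v (Or.inl huv)⟩
  -- the distance function is in B but not in A
  have hd2 : 2 ≤ G.dist a b := by
    rcases Nat.lt_or_ge (G.dist a b) 2 with h | h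
    · interval_cases h' : G.dist a b
      · exact absurd (hG.dist_eq_zero_iff.mp h') hab
      · exact absurd (SimpleGraph.dist_eq_one_iff_adj.mp h') hnadj
    · exact h
  have hdmem : (fun v => (G.dist a v : ℤ)) ∈ B := by
    refine ⟨by simp, fun u v huv => ?_⟩
    have h1 : G.dist a v ≤ G.dist a u + 1 := by
      have := hG.dist_triangle (u := a) (v := u) (w := v)
      rwa [SimpleGraph.dist_eq_one_iff_adj.mpr huv] at this
    have h2 : G.dist a u ≤ G.dist a v + 1 := by
      have := hG.dist_triangle (u := a) (v := v) (w := u)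
      rwa [SimpleGraph.dist_eq_one_iff_adj.mpr huv.symm] at this
    rw [abs_sub_le_iff]
    beta_reduce
    constructor <;> omega
  have hdnot : (fun v => (G.dist a v : ℤ)) ∉ A := by
    intro hmem
    have hadj : (G ⊔ SimpleGraph.fromEdgeSet {s(a, b)}).Adj a b :=
      Or.inr ((SimpleGraph.fromEdgeSet_adj _).mpr ⟨rfl, hab⟩)
    have := hmem.2 a b hadj
    simp only [SimpleGraph.dist_self, Nat.cast_zero, zero_sub, abs_neg] at this
    have : (G.dist a b : ℤ) ≤ 1 := by rwa [abs_of_nonneg (by positivity)] at this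
    omega
  have hss : A ⊂ B := ⟨hAB, fun h => hdnot (h hdmem)⟩
  have := Set.ncard_lt_ncard hss hBfin
  omega
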